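/- For pairwise different sites i, j, k ∈ Λ and spin σ ∈ {↑,↓}, [h_{ijσ}, h̃_{jkσ}] = h_{ikσ}. -/

import Mathlib

/-- The hopping term `h_{ijσ} = a_{iσ}† a_{jσ} + a_{jσ}† a_{iσ}`. -/
noncomputable def hop {E : Type*} [NormedAddCommGroup E] [InnerProductSpace ℂ E]
    [CompleteSpace E] {Λ : Type*} (a : Λ → Bool → E →L[ℂ] E) (i j : Λ) (σ : Bool) :
    E →L[ℂ] E :=
  star (a i σ) * a j σ + star (a j σ) * a i σ

/-- The signed hopping term `h̃_{ijσ} = a_{iσ}† a_{jσ} − a_{jσ}† a_{iσ}`. -/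
noncomputable def shop {E : Type*} [NormedAddCommGroup E] [InnerProductSpace ℂ E]
    [CompleteSpace E] {Λ : Type*} (a : Λ → Bool → E →L[ℂ] E) (i j : Λ) (σ : Bool) :
    E →L[ℂ] E :=
  star (a i σ) * a j σ - star (a j σ) * a i σ

/-- The number operator `n_{iσ} = a_{iσ}† a_{iσ}`. -/
noncomputable def num {E : Type*} [NormedAddCommGroup E] [InnerProductSpace ℂ E]
    [CompleteSpace E] {Λ : Type*} (a : Λ → Bool → E →L[ℂ] E) (i : Λ) (σ : Bool) :
    E →L[ℂ] E :=
  star (a i σ) * a i σ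

/-- **Commutator of a hopping with an adjacent signed hopping term** (Eq. (13c), case `i ≠ k`):
`[h_{ijσ}, h̃_{jkσ}] = h_{ikσ}` for pairwise different `i, j, k`. -/
theorem comm_hop_shop
    {E : Type*} [NormedAddCommGroup E] [InnerProductSpace ℂ E] [CompleteSpace E]
    {Λ : Type*} [DecidableEq Λ]
    (a : Λ → Bool → E →L[ℂ] E)
    (car1 : ∀ (i j : Λ) (σ τ : Bool), a i σ * a j τ + a j τ * a i σ = 0)
    (car2 : ∀ (i j : Λ) (σ τ : Bool),
      a i σ * star (a j τ) + star (a j τ) * a i σ = if i = j ∧ σ = τ then 1 else 0)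
    (i j k : Λ) (σ : Bool) (hij : i ≠ j) (hjk : j ≠ k) (hik : i ≠ k) :
    ⁅hop a i j σ, shop a j k σ⁆ = hop a i k σ := by
  set A := a i σ with hA
  set B := a j σ with hB
  set C := a k σ with hC
  -- anticommutation among annihilators
  have swap : ∀ x y : Λ, a y σ * a x σ = -(a x σ * a y σ) := by
    intro x y
    have h := car1 y x σ σ
    exact eq_neg_of_add_eq_zero_left h
  have hBA : B * A = -(A * B) := swap i j
  have hCA : C * A = -(A * C) := swap i k
  have hCB : C * B = -(B * C) := swap j k
  -- squares vanish
  have sq : ∀ x : Λ, a x σ * a x σ = 0 := by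
    intro x
    have h := car1 x x σ σ
    have h2 : (2 : ℂ) • (a x σ * a x σ) = 0 := by
      rw [two_smul]; exact h
    simpa using (smul_eq_zero.mp h2).resolve_left (by norm_num)
  have hBB : B * B = 0 := sq j
  -- star versions
  have sswap : ∀ x y : Λ, star (a y σ) * star (a x σ) = -(star (a x σ) * star (a y σ)) := by
    intro x y
    have h := congrArg star (car1 x y σ σ)
    simp only [star_add, star_mul, star_zero] at h
    exact eq_neg_of_add_eq_zero_left h
  have hBA' : star B * star A = -(star A * star B) := sswap i j
  have hCA' : star C * star A = -(star A * star C) := sswap i k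
  have hCB' : star C * star B = -(star B * star C) := sswap j k
  have ssq : ∀ x : Λ, star (a x σ) * star (a x σ) = 0 := by
    intro x
    have h := congrArg star (sq x)
    simp only [star_mul, star_zero] at h
    exact h
  have hBB' : star B * star B = 0 := ssq j
  -- mixed relations, distinct sites
  have mix : ∀ x y : Λ, x ≠ y → a x σ * star (a y σ) = -(star (a y σ) * a x σ) := by
    intro x y hxy
    have h := car2 x y σ σ
    rw [if_neg (by tauto)] at h
    exact eq_neg_of_add_eq_zero_left h
  have hABs : A * star B = -(star B * A) := mix i j hij
  have hACs : A * star C = -(star C * A) := mix i k hik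
  have hBAs : B * star A = -(star A * B) := mix j i hij.symm
  have hBCs : B * star C = -(star C * B) := mix j k hjk
  have hCAs : C * star A = -(star A * C) := mix k i hik.symm
  have hCBs : C * star B = -(star B * C) := mix k j hjk.symm
  -- same-site relation
  have hBBs : B * star B = 1 - star B * B := by
    have h := car2 j j σ σ
    rw [if_pos ⟨rfl, rfl⟩] at h
    exact eq_sub_of_add_eq h
  have ext : ∀ {x y z : E →L[ℂ] E}, x * y = z → ∀ w, x * (y * w) = z * w := by
    intro x y z h w; rw [← mul_assoc, h]
  simp only [hop, shop, Ring.lie_def]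
  rw [← hA, ← hB, ← hC]
  -- expand and normalize
  simp only [mul_add, add_mul, mul_sub, sub_mul, mul_assoc]
  simp only [hBA, hCA, hCB, hBB, hBA', hCA', hCB', hBB', hABs, hACs, hBAs, hBCs,
    hCAs, hCBs, hBBs, ext hBA, ext hCA, ext hCB, ext hBB, ext hBA', ext hCA',
    ext hCB', ext hBB', ext hABs, ext hACs, ext hBAs, ext hBCs, ext hCAs,
    ext hCBs, ext hBBs, mul_neg, neg_mul, mul_assoc, mul_zero, zero_mul, neg_neg,
    mul_one, one_mul, sub_mul, mul_sub, neg_zero, neg_sub, mul_add, add_mul]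
  abel
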